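/- With the Inverted-T density derivative formula dE/ds = [(a−b)e^{αε} + b(255+αs)e^{αs} − 254b·e^{αM} − a]/(127α), the function s ↦ dE/ds is strictly increasing in s on (0, ∞) for any α > 0, b > 0. Hence E is strictly convex in s there and the critical point of E, if it exists, is unique. -/
import Mathlib


theorem invertedT_deriv_strictMono
    (a b ε M α : ℝ) (hab : b < a) (hb : 0 < b) (hε : 0 < ε) (hα : 0 < α)
    (D : ℝ → ℝ)
    (hD : ∀ s : ℝ, D s = ((a - b) * Real.exp (α * ε) + b * (255 + α * s) * Real.exp (α * s)
          - 254 * b * Real.exp (α * M) - a) / (127 * α)) :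
    StrictMonoOn D (Set.Ioi (0:ℝ)) ∧
    ∀ s₁ ∈ Set.Ioi (0:ℝ), ∀ s₂ ∈ Set.Ioi (0:ℝ), D s₁ = 0 → D s₂ = 0 → s₁ = s₂ := by
  have hmono : StrictMonoOn D (Set.Ioi (0:ℝ)) := by
    intro x hx y hy hxy
    rw [hD, hD]
    have hx0 : (0:ℝ) < x := hx
    have key : b * (255 + α * x) * Real.exp (α * x)
        < b * (255 + α * y) * Real.exp (α * y) := by
      have h1 : b * (255 + α * x) < b * (255 + α * y) := by nlinarith [mul_pos hα (sub_pos.mpr hxy)]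
      have h2 : Real.exp (α * x) < Real.exp (α * y) := by
        apply Real.exp_lt_exp.mpr; nlinarith
      have hpos : 0 < b * (255 + α * x) := by nlinarith
      exact mul_lt_mul h1 h2.le (Real.exp_pos _) (by nlinarith)
    have hd : (0:ℝ) < 127 * α := by positivity
    exact div_lt_div_of_pos_right (by linarith) hd
  refine ⟨hmono, fun s₁ h₁ s₂ h₂ e₁ e₂ => hmono.injOn h₁ h₂ (by rw [e₁, e₂])⟩
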